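/- arXiv:2401.14916 — 2 statements merged into one kernel-verified Lean document; each statement's English description precedes it below -/
import Mathlib

section
/- Let f₁, …, f_m : ℝ^n → ℝ be nonzero linear functionals and let k ∈ {1,…,m}. Then f_k(x) = 0 for every x ∈ ℝ^n satisfying fᵢ(x) ≥ 0 for all i ∈ {1,…,m} (i.e., f_k = 0 is an implied equality of the inequality system {fᵢ(x) ≥ 0 : i = 1,…,m}) if and only if there exist reals pᵢ ≤ 0 for i ∈ {1,…,m}∖{k} such that f_k = Σ_{i≠k} pᵢ fᵢ. -/
/-- Farkas' lemma for linear functionals, proved by induction on the number of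
functionals. -/
lemma farkas_aux {V : Type*} [AddCommGroup V] [Module ℝ V] :
    ∀ (m : ℕ) (f : Fin m → (V →ₗ[ℝ] ℝ)) (g : V →ₗ[ℝ] ℝ),
      (∀ x, (∀ i, 0 ≤ f i x) → 0 ≤ g x) →
      ∃ c : Fin m → ℝ, (∀ i, 0 ≤ c i) ∧ g = ∑ i, c i • f i := by
  intro m
  induction m with
  | zero =>
    intro f g hg
    have hg0 : g = 0 := by
      ext x
      have h1 := hg x (fun i => i.elim0)
      have h2 := hg (-x) (fun i => i.elim0)
      simp only [map_neg, Left.nonneg_neg_iff] at h2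
      simp only [LinearMap.zero_apply]
      linarith
    exact ⟨fun _ => 0, fun _ => le_refl _, by simp [hg0]⟩
  | succ m ih =>
    intro f g hg
    by_cases hcase : ∀ x, (∀ i : Fin m, 0 ≤ f i.castSucc x) → 0 ≤ g x
    · obtain ⟨c, hc, hgc⟩ := ih (fun i => f i.castSucc) g hcase
      refine ⟨Fin.snoc c 0, fun i => ?_, ?_⟩
      · refine Fin.lastCases ?_ (fun j => ?_) i
        · simp
        · simpa using hc j
      · rw [Fin.sum_univ_castSucc]
        simpa using hgc
    · push_neg at hcase
      obtain ⟨y, hy, hgy⟩ := hcase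
      have hfmy : f (Fin.last m) y < 0 := by
        by_contra h
        push_neg at h
        exact absurd (hg y (fun i => Fin.lastCases h hy i)) (not_le.2 hgy)
      set fm := f (Fin.last m) with hfm_def
      have hfmy0 : fm y ≠ 0 := ne_of_lt hfmy
      set f' : Fin m → (V →ₗ[ℝ] ℝ) :=
        fun i => f i.castSucc - (f i.castSucc y / fm y) • fm with hf'_def
      set g' : V →ₗ[ℝ] ℝ := g - (g y / fm y) • fm with hg'_def
      have key : ∀ x, (∀ i : Fin m, 0 ≤ f' i x) → 0 ≤ g' x := by
        intro x hx
        set x' := x - (fm x / fm y) • y with hx'_def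
        have hfmx' : fm x' = 0 := by
          simp only [hx'_def, map_sub, map_smul, smul_eq_mul]
          field_simp
          ring
        have hfi : ∀ i : Fin m, f i.castSucc x' = f' i x := by
          intro i
          simp only [hx'_def, hf'_def, map_sub, map_smul, smul_eq_mul,
            LinearMap.sub_apply, LinearMap.smul_apply]
          ring
        have hgx' : g x' = g' x := by
          simp only [hx'_def, hg'_def, map_sub, map_smul, smul_eq_mul,
            LinearMap.sub_apply, LinearMap.smul_apply]
          ring
        have hx'nonneg : ∀ i : Fin (m + 1), 0 ≤ f i x' := by
          intro i
          refine Fin.lastCases ?_ (fun j => ?_) i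
          · rw [← hfm_def, hfmx']
          · rw [hfi j]; exact hx j
        have := hg x' hx'nonneg
        rwa [hgx'] at this
      obtain ⟨c, hc, hgc⟩ := ih f' g' key
      have hsum_nonneg : ∑ i, c i * f i.castSucc y ≥ 0 :=
        Finset.sum_nonneg fun i _ => mul_nonneg (hc i) (hy i)
      set cm := (g y - ∑ i, c i * f i.castSucc y) / fm y with hcm_def
      have hcm_nonneg : 0 ≤ cm := by
        rw [hcm_def, div_nonneg_iff]
        exact Or.inr ⟨by linarith, by linarith⟩
      refine ⟨Fin.snoc c cm, fun i => ?_, ?_⟩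
      · refine Fin.lastCases ?_ (fun j => ?_) i
        · simpa using hcm_nonneg
        · simpa using hc j
      · ext x
        have hg'x : g' x = ∑ i, c i * f' i x := by
          rw [hgc]; simp
        have hf'x : ∀ i : Fin m, f' i x =
            f i.castSucc x - f i.castSucc y / fm y * fm x := by
          intro i; simp [hf'_def]
        have hgx : g x = g' x + g y / fm y * fm x := by
          simp [hg'_def]
        rw [Fin.sum_univ_castSucc]
        simp only [LinearMap.coe_sum, Finset.sum_apply, LinearMap.smul_apply,
          smul_eq_mul, Fin.snoc_castSucc, Fin.snoc_last, LinearMap.add_apply]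
        rw [hgx, hg'x]
        have : ∑ i, c i * f' i x =
            ∑ i, c i * f i.castSucc x - (∑ i, c i * f i.castSucc y) / fm y * fm x := by
          rw [Finset.sum_div, Finset.sum_mul, ← Finset.sum_sub_distrib]
          refine Finset.sum_congr rfl fun i _ => ?_
          rw [hf'x i]; ring
        rw [this, hcm_def]
        field_simp
        ring

/-- Lemma III.1: `f_k = 0` is an implied equality of the inequality system
`{fᵢ(x) ≥ 0 : i = 1,…,m}` iff `f_k` is a linear combination of the other `fᵢ`'s
with nonpositive coefficients. -/
theorem implied_equality_iff (n m : ℕ) (f : Fin m → ((Fin n → ℝ) →ₗ[ℝ] ℝ))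
    (hf : ∀ i, f i ≠ 0) (k : Fin m) :
    (∀ x : Fin n → ℝ, (∀ i, 0 ≤ f i x) → f k x = 0) ↔
      ∃ p : Fin m → ℝ, (∀ i, i ≠ k → p i ≤ 0) ∧
        f k = ∑ i ∈ Finset.univ.erase k, p i • f i := by
  constructor
  · intro h
    have hg : ∀ x, (∀ i, 0 ≤ f i x) → 0 ≤ (-(f k)) x := by
      intro x hx
      simp [h x hx]
    obtain ⟨c, hc, hgc⟩ := farkas_aux m f (-(f k)) hg
    -- -(f k) = ∑ c i • f i = c k • f k + ∑_{i ≠ k} c i • f i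
    have hsplit : ∑ i, c i • f i = c k • f k + ∑ i ∈ Finset.univ.erase k, c i • f i :=
      (Finset.add_sum_erase _ _ (Finset.mem_univ k)).symm
    rw [hsplit] at hgc
    have hck : (0 : ℝ) < 1 + c k := by linarith [hc k]
    refine ⟨fun i => -(c i) / (1 + c k), fun i _ => ?_, ?_⟩
    · apply div_nonpos_of_nonpos_of_nonneg <;> linarith [hc i]
    · have h0 : f k + c k • f k + ∑ i ∈ Finset.univ.erase k, c i • f i = 0 := by
        rw [add_assoc, ← hgc]
        simp
      have h1 : (1 + c k) • f k = -(∑ i ∈ Finset.univ.erase k, c i • f i) := by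
        rw [add_smul, one_smul]
        exact eq_neg_of_add_eq_zero_left h0
      have h2 : f k = (1 + c k)⁻¹ • ((1 + c k) • f k) := by
        rw [smul_smul, inv_mul_cancel₀ (ne_of_gt hck), one_smul]
      rw [h2, h1, smul_neg, Finset.smul_sum, ← Finset.sum_neg_distrib]
      refine Finset.sum_congr rfl fun i _ => ?_
      rw [smul_smul, ← neg_smul]
      congr 1
      field_simp
  · rintro ⟨p, hp, hfk⟩ x hx
    have hle : f k x ≤ 0 := by
      rw [hfk]
      simp only [LinearMap.coe_sum, Finset.sum_apply, LinearMap.smul_apply,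
        smul_eq_mul]
      apply Finset.sum_nonpos
      intro i hi
      exact mul_nonpos_of_nonpos_of_nonneg (hp i (Finset.ne_of_mem_erase hi)) (hx i)
    exact le_antisymm hle (hx k)
end

section
/- Fix n ≥ 1 and consider real-valued set functions h on the subsets of {1,…,n} with h(∅) = 0 (h(A) plays the role of the joint entropy of the random variables indexed by A). Define the elemental functionals: for each i ∈ {1,…,n}, e_i(h) = h({1,…,n}) − h({1,…,n}∖{i}); and for each pair i ≠ j in {1,…,n} and each K ⊆ {1,…,n}∖{i,j}, e_{i,j,K}(h) = h({i}∪K) + h({j}∪K) − h({i,j}∪K) − h(K). Then for any nonempty subsets G, G' ⊆ {1,…,n} and any subset G'' ⊆ {1,…,n}, the functional μ_{G,G',G''}(h) = h(G∪G'') + h(G'∪G'') − h(G∪G'∪G'') − h(G'') (representing the conditional mutual information I(X_G; X_{G'} | X_{G''}) in terms of joint entropies) is a conic combination of the elemental functionals: there exist nonnegative reals c_i and c_{i,j,K} such that μ_{G,G',G''}(h) = Σ_i c_i e_i(h) + Σ_{i,j,K} c_{i,j,K} e_{i,j,K}(h) for all such h. -/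
open Finset

variable {n : ℕ}

/-- The right-hand side conic combination functional. -/
def RHS (c : Fin n → ℝ) (d : Fin n → Fin n → Finset (Fin n) → ℝ)
    (h : Finset (Fin n) → ℝ) : ℝ :=
  (∑ i, c i * (h Finset.univ - h (Finset.univ \ {i}))) +
  ∑ i, ∑ j ∈ Finset.univ.erase i,
    ∑ K ∈ (Finset.univ \ ({i, j} : Finset (Fin n))).powerset,
      d i j K * (h ({i} ∪ K) + h ({j} ∪ K) - h ({i, j} ∪ K) - h K)

/-- A functional is good if it is a conic combination of elemental functionals. -/
def Good (f : (Finset (Fin n) → ℝ) → ℝ) : Prop :=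
  ∃ c d, (∀ i, 0 ≤ c i) ∧ (∀ i j K, 0 ≤ d i j K) ∧ ∀ h, f h = RHS c d h

lemma good_congr {f g : (Finset (Fin n) → ℝ) → ℝ} (hfg : ∀ h, f h = g h)
    (hf : Good f) : Good g := by
  obtain ⟨c, d, hc, hd, he⟩ := hf
  exact ⟨c, d, hc, hd, fun h => (hfg h).symm.trans (he h)⟩

lemma good_zero : Good (fun _ : Finset (Fin n) → ℝ => (0 : ℝ)) := by
  refine ⟨0, 0, fun _ => le_refl 0, fun _ _ _ => le_refl 0, fun h => ?_⟩
  simp [RHS]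

lemma good_add {f g : (Finset (Fin n) → ℝ) → ℝ} (hf : Good f) (hg : Good g) :
    Good (fun h => f h + g h) := by
  obtain ⟨c, d, hc, hd, he⟩ := hf
  obtain ⟨c', d', hc', hd', he'⟩ := hg
  refine ⟨c + c', fun i j K => d i j K + d' i j K,
    fun i => add_nonneg (hc i) (hc' i),
    fun i j K => add_nonneg (hd i j K) (hd' i j K), fun h => ?_⟩
  show f h + g h = _
  rw [he h, he' h]
  simp only [RHS, Pi.add_apply, add_mul, Finset.sum_add_distrib]
  ring

lemma good_e (a : Fin n) :
    Good (fun h : Finset (Fin n) → ℝ => h Finset.univ - h (Finset.univ \ {a})) := by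
  refine ⟨fun i => if i = a then 1 else 0, 0,
    fun i => by dsimp only; split <;> norm_num, fun _ _ _ => le_refl 0, fun h => ?_⟩
  simp only [RHS, Pi.zero_apply, zero_mul, Finset.sum_const_zero, add_zero]
  rw [Finset.sum_eq_single_of_mem a (mem_univ a)]
  · simp
  · intro i _ hi; simp [hi]

lemma good_elem (i j : Fin n) (K : Finset (Fin n)) (hij : i ≠ j)
    (hK : K ⊆ Finset.univ \ ({i, j} : Finset (Fin n))) :
    Good (fun h : Finset (Fin n) → ℝ =>
      h ({i} ∪ K) + h ({j} ∪ K) - h ({i, j} ∪ K) - h K) := by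
  refine ⟨0, fun i' j' K' => if i' = i ∧ j' = j ∧ K' = K then 1 else 0,
    fun _ => le_refl 0, fun i' j' K' => by dsimp only; split <;> norm_num, fun h => ?_⟩
  simp only [RHS, Pi.zero_apply, zero_mul, Finset.sum_const_zero, zero_add]
  rw [Finset.sum_eq_single_of_mem i (mem_univ i)]
  · rw [Finset.sum_eq_single_of_mem j (Finset.mem_erase.2 ⟨hij.symm, mem_univ j⟩)]
    · rw [Finset.sum_eq_single_of_mem K (Finset.mem_powerset.2 hK)]
      · simp
      · intro K' _ hK'; simp [hK']
    · intro j' _ hj'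
      exact Finset.sum_eq_zero fun K' _ => by simp [hj']
  · intro i' _ hi'
    exact Finset.sum_eq_zero fun j' _ => Finset.sum_eq_zero fun K' _ => by simp [hi']

lemma good_cond_ent_aux (a : Fin n) :
    ∀ m (K : Finset (Fin n)), (Finset.univ \ insert a K).card = m → a ∉ K →
      Good (fun h => h (insert a K) - h K) := by
  intro m
  induction m with
  | zero =>
    intro K hm ha
    have huniv : insert a K = Finset.univ := by
      have := Finset.card_eq_zero.1 hm
      have hsub : Finset.univ ⊆ insert a K := by
        rwa [← Finset.sdiff_eq_empty_iff_subset]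
      exact Finset.eq_univ_of_forall fun x => hsub (Finset.mem_univ x)
    have hK : K = Finset.univ \ {a} := by
      rw [Finset.sdiff_singleton_eq_erase, ← huniv, Finset.erase_insert ha]
    refine good_congr (fun h => ?_) (good_e a)
    rw [huniv, hK]
  | succ m ih =>
    intro K hm ha
    have hne : (Finset.univ \ insert a K).Nonempty := by
      rw [← Finset.card_pos, hm]; omega
    obtain ⟨b, hb⟩ := hne
    rw [Finset.mem_sdiff, Finset.mem_insert] at hb
    push_neg at hb
    obtain ⟨-, hba, hbK⟩ := hb
    have hcard : (Finset.univ \ insert a (insert b K)).card = m := by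
      have : insert a (insert b K) = insert b (insert a K) := Finset.insert_comm a b K
      rw [this]
      have hb' : b ∈ Finset.univ \ insert a K := by
        simp [Finset.mem_sdiff, Finset.mem_insert, hba, hbK]
      have : Finset.univ \ insert b (insert a K) =
          (Finset.univ \ insert a K).erase b := by
        ext x
        simp only [Finset.mem_sdiff, Finset.mem_insert, Finset.mem_erase, Finset.mem_univ,
          true_and]
        tauto
      rw [this, Finset.card_erase_of_mem hb', hm]
      simp
    have h1 : Good (fun h : Finset (Fin n) → ℝ =>
        h (insert a (insert b K)) - h (insert b K)) :=
      ih (insert b K) hcard (by simp [Ne.symm hba, ha])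
    have h2 : Good (fun h : Finset (Fin n) → ℝ =>
        h ({a} ∪ K) + h ({b} ∪ K) - h ({a, b} ∪ K) - h K) := by
      refine good_elem a b K (Ne.symm hba) ?_
      intro x hx
      simp only [Finset.mem_sdiff, Finset.mem_univ, true_and, Finset.mem_insert,
        Finset.mem_singleton]
      push_neg
      exact ⟨fun hxa => ha (hxa ▸ hx), fun hxb => hbK (hxb ▸ hx)⟩
    refine good_congr (fun h => ?_) (good_add h1 h2)
    have e1 : ({a} : Finset (Fin n)) ∪ K = insert a K := by rw [Finset.singleton_union]
    have e2 : ({b} : Finset (Fin n)) ∪ K = insert b K := by rw [Finset.singleton_union]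
    have e3 : ({a, b} : Finset (Fin n)) ∪ K = insert a (insert b K) := by
      rw [Finset.insert_union, Finset.singleton_union]
    rw [e1, e2, e3]
    ring

lemma good_cond_ent (a : Fin n) (K : Finset (Fin n)) (ha : a ∉ K) :
    Good (fun h : Finset (Fin n) → ℝ => h (insert a K) - h K) :=
  good_cond_ent_aux a _ K rfl ha

lemma good_mu_single (a b : Fin n) (K : Finset (Fin n)) :
    Good (fun h : Finset (Fin n) → ℝ =>
      h (insert a K) + h (insert b K) - h (insert a (insert b K)) - h K) := by
  by_cases haK : a ∈ K
  · refine good_congr (fun h => ?_) good_zero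
    rw [Finset.insert_eq_self.2 haK, Finset.insert_comm, Finset.insert_eq_self.2 haK]
    ring
  · by_cases hbK : b ∈ K
    · refine good_congr (fun h => ?_) good_zero
      rw [Finset.insert_eq_self.2 hbK]
      ring
    · by_cases hab : a = b
      · subst hab
        refine good_congr (fun h => ?_) (good_cond_ent a K haK)
        rw [Finset.insert_idem]
        ring
      · refine good_congr (fun h => ?_) (good_elem a b K hab ?_)
        · have e1 : ({a} : Finset (Fin n)) ∪ K = insert a K := by rw [Finset.singleton_union]
          have e2 : ({b} : Finset (Fin n)) ∪ K = insert b K := by rw [Finset.singleton_union]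
          have e3 : ({a, b} : Finset (Fin n)) ∪ K = insert a (insert b K) := by
            rw [Finset.insert_union, Finset.singleton_union]
          rw [e1, e2, e3]
        · intro x hx
          simp only [Finset.mem_sdiff, Finset.mem_univ, true_and, Finset.mem_insert,
            Finset.mem_singleton]
          push_neg
          exact ⟨fun h' => haK (h' ▸ hx), fun h' => hbK (h' ▸ hx)⟩

lemma good_mu_pair (a : Fin n) (G' G'' : Finset (Fin n)) (hG' : G'.Nonempty) :
    Good (fun h : Finset (Fin n) → ℝ =>
      h (insert a G'') + h (G' ∪ G'') - h (insert a (G' ∪ G'')) - h G'') := by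
  induction hG' using Finset.Nonempty.cons_induction with
  | singleton b =>
    refine good_congr (fun h => ?_) (good_mu_single a b G'')
    rw [← Finset.insert_eq]
  | cons b S hbS hS ih =>
    have h2 := good_mu_single a b (S ∪ G'')
    refine good_congr (fun h => ?_) (good_add ih h2)
    have e1 : (Finset.cons b S hbS) ∪ G'' = insert b (S ∪ G'') := by
      rw [Finset.cons_eq_insert, Finset.insert_union]
    rw [e1]
    ring

lemma good_mu (G G' G'' : Finset (Fin n)) (hG : G.Nonempty) (hG' : G'.Nonempty) :
    Good (fun h : Finset (Fin n) → ℝ =>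
      h (G ∪ G'') + h (G' ∪ G'') - h (G ∪ G' ∪ G'') - h G'') := by
  induction hG using Finset.Nonempty.cons_induction with
  | singleton a =>
    refine good_congr (fun h => ?_) (good_mu_pair a G' G'' hG')
    rw [Finset.union_assoc, ← Finset.insert_eq, ← Finset.insert_eq]
  | cons a S haS hS ih =>
    have h2 := good_mu_pair a G' (S ∪ G'') hG'
    refine good_congr (fun h => ?_) (good_add ih h2)
    have e1 : (Finset.cons a S haS) ∪ G'' = insert a (S ∪ G'') := by
      rw [Finset.cons_eq_insert, Finset.insert_union]
    have e2 : (Finset.cons a S haS) ∪ G' ∪ G'' = insert a (G' ∪ (S ∪ G'')) := by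
      rw [Finset.cons_eq_insert, Finset.insert_union, Finset.insert_union]
      congr 1
      ext x; simp only [Finset.mem_union]; tauto
    have e3 : G' ∪ (S ∪ G'') = S ∪ G' ∪ G'' := by
      ext x; simp only [Finset.mem_union]; tauto
    rw [e1, e2, e3]
    ring

/-- Theorem 1 (Yeung 1997): every conditional mutual information functional
`μ_{G,G',G''}(h) = h(G∪G'') + h(G'∪G'') − h(G∪G'∪G'') − h(G'')` on entropy-like set
functions is a conic combination of the elemental functionals
`e_i(h) = h({1,…,n}) − h({1,…,n}∖{i})` and
`e_{i,j,K}(h) = h({i}∪K) + h({j}∪K) − h({i,j}∪K) − h(K)` for `i ≠ j`,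
`K ⊆ {1,…,n}∖{i,j}`. -/
theorem mutual_information_conic_combination (n : ℕ) (hn : 1 ≤ n)
    (G G' G'' : Finset (Fin n)) (hG : G.Nonempty) (hG' : G'.Nonempty) :
    ∃ (c : Fin n → ℝ) (d : Fin n → Fin n → Finset (Fin n) → ℝ),
      (∀ i, 0 ≤ c i) ∧ (∀ i j K, 0 ≤ d i j K) ∧
      ∀ h : Finset (Fin n) → ℝ, h ∅ = 0 →
        h (G ∪ G'') + h (G' ∪ G'') - h (G ∪ G' ∪ G'') - h G'' =
          (∑ i, c i * (h Finset.univ - h (Finset.univ \ {i}))) +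
          ∑ i, ∑ j ∈ Finset.univ.erase i,
            ∑ K ∈ (Finset.univ \ ({i, j} : Finset (Fin n))).powerset,
              d i j K * (h ({i} ∪ K) + h ({j} ∪ K) - h ({i, j} ∪ K) - h K) := by
  obtain ⟨c, d, hc, hd, he⟩ := good_mu G G' G'' hG hG'
  exact ⟨c, d, hc, hd, fun h _ => he h⟩
end
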